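/- Let {S, T, E, N, x} be a data set as above (with O_{E,T}, O_{N,T} mapping X into holomorphic functions on D and M_{F^S} mapping X into H(K_S)), and set P := M_{F^S}^{[*]} M_{F^S}. A function f : D → Y is a solution of the problem AIP (i.e., f ∈ H(K_S), M_{F^S}^{[*]} f = x and ‖f‖_{H(K_S)} ≤ 1) if and only if the L(ℂ ⊕ X ⊕ Y)-valued kernel K(z,ζ) = [[1, x*, f(ζ)*],[x, P, F^S(ζ)*],[f(z), F^S(z), K_S(z,ζ)]] is a positive kernel on D × D. -/

import Mathlib

open ContinuousLinearMap Metric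
open scoped InnerProductSpace ComplexOrder

noncomputable section

/-- The de Branges–Rovnyak kernel `K_S(z,ζ) = (I − S(z)S(ζ)*)/(1 − z ζ̄)`. -/
def dbrKernel {U Y : Type*}
    [NormedAddCommGroup U] [InnerProductSpace ℂ U] [CompleteSpace U]
    [NormedAddCommGroup Y] [InnerProductSpace ℂ Y] [CompleteSpace Y]
    (S : ℂ → (U →L[ℂ] Y)) (z ζ : ℂ) : Y →L[ℂ] Y :=
  (1 - z * (starRingEnd ℂ) ζ)⁻¹ • (1 - (S z) ∘L (adjoint (S ζ)))

/-- The operator-valued Schur class on the unit disk. -/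
def IsSchur {U Y : Type*}
    [NormedAddCommGroup U] [NormedSpace ℂ U]
    [NormedAddCommGroup Y] [NormedSpace ℂ Y]
    (S : ℂ → (U →L[ℂ] Y)) : Prop :=
  AnalyticOnNhd ℂ S (ball (0:ℂ) 1) ∧ ∀ z ∈ ball (0:ℂ) 1, ‖S z‖ ≤ 1

/-- `H` (with realization map `J` and kernel elements `k`) is the reproducing kernel
Hilbert space of the de Branges–Rovnyak kernel `K_S`. -/
structure IsDBRSpace {U Y : Type*}
    [NormedAddCommGroup U] [InnerProductSpace ℂ U] [CompleteSpace U]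
    [NormedAddCommGroup Y] [InnerProductSpace ℂ Y] [CompleteSpace Y]
    (S : ℂ → (U →L[ℂ] Y)) (H : Type*) [NormedAddCommGroup H]
    [InnerProductSpace ℂ H] [CompleteSpace H]
    (J : H →ₗ[ℂ] (ℂ → Y)) (k : ℂ → Y → H) : Prop where
  ext : ∀ f g : H, (∀ z ∈ ball (0:ℂ) 1, J f z = J g z) → f = g
  kernel_eq : ∀ ζ ∈ ball (0:ℂ) 1, ∀ y : Y, ∀ z ∈ ball (0:ℂ) 1,
    J (k ζ y) z = dbrKernel S z ζ y
  reproducing : ∀ ζ ∈ ball (0:ℂ) 1, ∀ (y : Y) (f : H),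
    ⟪k ζ y, f⟫_ℂ = ⟪y, J f ζ⟫_ℂ

/-- The rank-one operator `x x* : y ↦ ⟨y, x⟩ x`. -/
def rankOne {X : Type*} [NormedAddCommGroup X] [InnerProductSpace ℂ X]
    (x : X) : X →L[ℂ] X :=
  (innerSL ℂ x).smulRight x

section AuxLemmas

variable {X U Y : Type*}
    [NormedAddCommGroup X] [InnerProductSpace ℂ X] [CompleteSpace X]
    [NormedAddCommGroup U] [InnerProductSpace ℂ U] [CompleteSpace U]
    [NormedAddCommGroup Y] [InnerProductSpace ℂ Y] [CompleteSpace Y]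
    {S : ℂ → (U →L[ℂ] Y)}
    {H : Type*} [NormedAddCommGroup H] [InnerProductSpace ℂ H] [CompleteSpace H]
    {J : H →ₗ[ℂ] (ℂ → Y)} {k : ℂ → Y → H}

/-- Key algebraic identity: the quadratic form of the `3×3` block kernel collapses to a
`|C|² + C̄ A + Ā C + ‖U‖²` expression. -/
theorem aux_lemA (hH : IsDBRSpace S H J k)
    (FS : ℂ → (X →L[ℂ] Y)) (MF : X →L[ℂ] H)
    (hMF : ∀ x0 : X, ∀ z ∈ ball (0:ℂ) 1, J (MF x0) z = FS z x0)
    (P : X →L[ℂ] X) (hP : P = adjoint MF ∘L MF)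
    (x : X) (f : ℂ → Y)
    {n : ℕ} (z : Fin n → ℂ) (hz : ∀ i, z i ∈ ball (0:ℂ) 1)
    (c : Fin n → ℂ) (xv : Fin n → X) (yv : Fin n → Y) :
    (∑ i, ∑ j,
        ((starRingEnd ℂ) (c i) *
            (c j + ⟪x, xv j⟫_ℂ + ⟪f (z j), yv j⟫_ℂ)
          + ⟪xv i, (c j) • x + P (xv j) + adjoint (FS (z j)) (yv j)⟫_ℂ
          + ⟪yv i, (c j) • f (z i) + FS (z i) (xv j)
              + dbrKernel S (z i) (z j) (yv j)⟫_ℂ)) =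
      (starRingEnd ℂ) (∑ i, c i) * (∑ i, c i)
        + (starRingEnd ℂ) (∑ i, c i) * (∑ i, (⟪x, xv i⟫_ℂ + ⟪f (z i), yv i⟫_ℂ))
        + (starRingEnd ℂ) (∑ i, (⟪x, xv i⟫_ℂ + ⟪f (z i), yv i⟫_ℂ)) * (∑ i, c i)
        + ⟪∑ i, (MF (xv i) + k (z i) (yv i)),
            ∑ i, (MF (xv i) + k (z i) (yv i))⟫_ℂ := by
  have e3 : ∀ i j : Fin n, ⟪yv i, FS (z i) (xv j)⟫_ℂ
      = ⟪k (z i) (yv i), MF (xv j)⟫_ℂ := by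
    intro i j
    rw [hH.reproducing (z i) (hz i) (yv i) (MF (xv j)), hMF _ _ (hz i)]
  have e1 : ∀ i j : Fin n, ⟪xv i, P (xv j)⟫_ℂ = ⟪MF (xv i), MF (xv j)⟫_ℂ := by
    intro i j
    rw [hP, ContinuousLinearMap.comp_apply, ContinuousLinearMap.adjoint_inner_right]
  have e2 : ∀ i j : Fin n, ⟪xv i, adjoint (FS (z j)) (yv j)⟫_ℂ
      = ⟪MF (xv i), k (z j) (yv j)⟫_ℂ := by
    intro i j
    rw [ContinuousLinearMap.adjoint_inner_right,
      ← inner_conj_symm (FS (z j) (xv i)) (yv j), e3 j i, inner_conj_symm]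
  have e4 : ∀ i j : Fin n, ⟪yv i, dbrKernel S (z i) (z j) (yv j)⟫_ℂ
      = ⟪k (z i) (yv i), k (z j) (yv j)⟫_ℂ := by
    intro i j
    rw [hH.reproducing (z i) (hz i) (yv i), hH.kernel_eq (z j) (hz j) (yv j) (z i) (hz i)]
  calc
    (∑ i, ∑ j,
        ((starRingEnd ℂ) (c i) *
            (c j + ⟪x, xv j⟫_ℂ + ⟪f (z j), yv j⟫_ℂ)
          + ⟪xv i, (c j) • x + P (xv j) + adjoint (FS (z j)) (yv j)⟫_ℂ
          + ⟪yv i, (c j) • f (z i) + FS (z i) (xv j)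
              + dbrKernel S (z i) (z j) (yv j)⟫_ℂ))
      = ∑ i, ∑ j,
        ((starRingEnd ℂ) (c i) * (c j)
          + (starRingEnd ℂ) (c i) * (⟪x, xv j⟫_ℂ + ⟪f (z j), yv j⟫_ℂ)
          + (starRingEnd ℂ) (⟪x, xv i⟫_ℂ + ⟪f (z i), yv i⟫_ℂ) * (c j)
          + ⟪MF (xv i) + k (z i) (yv i), MF (xv j) + k (z j) (yv j)⟫_ℂ) := by
        refine Finset.sum_congr rfl fun i _ => Finset.sum_congr rfl fun j _ => ?_
        simp only [inner_add_right, inner_add_left, inner_smul_right, map_add,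
          inner_conj_symm, e1 i j, e2 i j, e3 i j, e4 i j]
        ring
    _ = _ := by
        rw [map_sum, map_sum, Finset.sum_mul_sum, Finset.sum_mul_sum, Finset.sum_mul_sum]
        simp only [sum_inner]
        simp only [inner_sum]
        simp only [← Finset.sum_add_distrib]

theorem aux_fwd_nonneg {H : Type*} [NormedAddCommGroup H] [InnerProductSpace ℂ H]
    (g Uv : H) (C A : ℂ) (hA : A = ⟪g, Uv⟫_ℂ) (hg : ‖g‖ ≤ 1) :
    0 ≤ (starRingEnd ℂ) C * C + (starRingEnd ℂ) C * A + (starRingEnd ℂ) A * C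
      + ⟪Uv, Uv⟫_ℂ := by
  set w := (starRingEnd ℂ) C * A with hw
  have h1 : ⟪Uv, Uv⟫_ℂ = ((‖Uv‖ ^ 2 : ℝ) : ℂ) := by
    rw [inner_self_eq_norm_sq_to_K]; norm_cast
  have h2 : (starRingEnd ℂ) C * C = ((‖C‖ ^ 2 : ℝ) : ℂ) := by
    rw [mul_comm, Complex.mul_conj, Complex.normSq_eq_norm_sq]
  have h3 : (starRingEnd ℂ) A * C = (starRingEnd ℂ) w := by
    simp [hw, map_mul, mul_comm]
  have h4 : w + (starRingEnd ℂ) w = ((2 * w.re : ℝ) : ℂ) := Complex.add_conj w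
  have key : (starRingEnd ℂ) C * C + (starRingEnd ℂ) C * A + (starRingEnd ℂ) A * C
      + ⟪Uv, Uv⟫_ℂ = ((‖C‖ ^ 2 + 2 * w.re + ‖Uv‖ ^ 2 : ℝ) : ℂ) := by
    rw [h1, h2, h3, ← hw]
    rw [show ((‖C‖ ^ 2 : ℝ) : ℂ) + w + (starRingEnd ℂ) w + ((‖Uv‖ ^ 2 : ℝ) : ℂ)
        = ((‖C‖ ^ 2 : ℝ) : ℂ) + (w + (starRingEnd ℂ) w) + ((‖Uv‖ ^ 2 : ℝ) : ℂ) by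
        ring, h4]
    push_cast; ring
  rw [key, Complex.zero_le_real]
  have hA' : ‖A‖ ≤ ‖Uv‖ := by
    rw [hA]
    calc ‖⟪g, Uv⟫_ℂ‖ = ‖⟪g, Uv⟫_ℂ‖ := rfl
      _ ≤ ‖g‖ * ‖Uv‖ := norm_inner_le_norm _ _
      _ ≤ 1 * ‖Uv‖ := mul_le_mul_of_nonneg_right hg (norm_nonneg _)
      _ = ‖Uv‖ := one_mul _
  have hwre : |w.re| ≤ ‖C‖ * ‖Uv‖ := by
    calc |w.re| ≤ ‖w‖ := Complex.abs_re_le_norm w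
      _ = ‖C‖ * ‖A‖ := by simp [hw, map_mul]
      _ ≤ ‖C‖ * ‖Uv‖ :=
          mul_le_mul_of_nonneg_left hA' (norm_nonneg _)
  have := abs_le.mp hwre
  nlinarith [sq_nonneg (‖C‖ - ‖Uv‖)]

theorem aux_back_ineq {H : Type*} [NormedAddCommGroup H] [InnerProductSpace ℂ H]
    (A : ℂ) (Uv : H)
    (h : 0 ≤ (starRingEnd ℂ) (-A) * (-A) + (starRingEnd ℂ) (-A) * A
        + (starRingEnd ℂ) A * (-A) + ⟪Uv, Uv⟫_ℂ) : ‖A‖ ≤ ‖Uv‖ := by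
  have hAA : (starRingEnd ℂ) A * A = ((‖A‖ ^ 2 : ℝ) : ℂ) := by
    rw [mul_comm, Complex.mul_conj, Complex.normSq_eq_norm_sq]
  have h1 : (starRingEnd ℂ) (-A) * (-A) + (starRingEnd ℂ) (-A) * A
      + (starRingEnd ℂ) A * (-A) + ⟪Uv, Uv⟫_ℂ
      = ((‖Uv‖ ^ 2 - ‖A‖ ^ 2 : ℝ) : ℂ) := by
    have h2 : (starRingEnd ℂ) (-A) * (-A) + (starRingEnd ℂ) (-A) * A
        + (starRingEnd ℂ) A * (-A) = -((starRingEnd ℂ) A * A) := by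
      rw [map_neg]; ring
    have hUv : ⟪Uv, Uv⟫_ℂ = ((‖Uv‖ ^ 2 : ℝ) : ℂ) := by
      rw [inner_self_eq_norm_sq_to_K]; norm_cast
    rw [h2, hAA, hUv]
    push_cast; ring
  rw [h1, Complex.zero_le_real] at h
  nlinarith [norm_nonneg A, norm_nonneg Uv]

theorem aux_sum_over {M : Type*} [AddCommMonoid M] (s : Finset ℂ) (G : ℂ → M)
    (e : Fin s.card → ℂ) (hee : ∀ i, e i = (s.equivFin.symm i : ℂ)) :
    (∑ i, G (e i)) = ∑ ζ ∈ s, G ζ := by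
  simp only [hee]
  rw [← Finset.sum_coe_sort s G]
  exact Equiv.sum_comp s.equivFin.symm fun a => G (a : ℂ)

theorem aux_k_zero (hH : IsDBRSpace S H J k) {ζ : ℂ} (hζ : ζ ∈ ball (0:ℂ) 1) :
    k ζ (0 : Y) = 0 := by
  apply hH.ext
  intro w hw
  have h1 := hH.kernel_eq ζ hζ 0 w hw
  simp [h1]

theorem aux_k_add (hH : IsDBRSpace S H J k) {ζ : ℂ} (hζ : ζ ∈ ball (0:ℂ) 1)
    (y y' : Y) : k ζ (y + y') = k ζ y + k ζ y' := by
  apply hH.ext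
  intro w hw
  rw [map_add, Pi.add_apply, hH.kernel_eq ζ hζ _ w hw, hH.kernel_eq ζ hζ y w hw,
    hH.kernel_eq ζ hζ y' w hw, map_add]

theorem aux_k_smul (hH : IsDBRSpace S H J k) {ζ : ℂ} (hζ : ζ ∈ ball (0:ℂ) 1)
    (a : ℂ) (y : Y) : k ζ (a • y) = a • k ζ y := by
  apply hH.ext
  intro w hw
  rw [map_smul, Pi.smul_apply, hH.kernel_eq ζ hζ _ w hw, hH.kernel_eq ζ hζ y w hw,
    map_smul]

end AuxLemmas

theorem stmt4
    {X U Y : Type*}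
    [NormedAddCommGroup X] [InnerProductSpace ℂ X] [CompleteSpace X]
    [NormedAddCommGroup U] [InnerProductSpace ℂ U] [CompleteSpace U]
    [NormedAddCommGroup Y] [InnerProductSpace ℂ Y] [CompleteSpace Y]
    (S : ℂ → (U →L[ℂ] Y)) (hS : IsSchur S)
    (T : X →L[ℂ] X) (E : X →L[ℂ] Y) (N : X →L[ℂ] U) (x : X)
    (OET : X → ℂ → Y) (ONT : X → ℂ → U)
    (hOET : ∀ x0 : X, ∀ z ∈ ball (0:ℂ) 1,
      HasSum (fun n : ℕ => z ^ n • E ((T ^ n) x0)) (OET x0 z))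
    (hONT : ∀ x0 : X, ∀ z ∈ ball (0:ℂ) 1,
      HasSum (fun n : ℕ => z ^ n • N ((T ^ n) x0)) (ONT x0 z))
    (FS : ℂ → (X →L[ℂ] Y))
    (hFS : ∀ x0 : X, ∀ z ∈ ball (0:ℂ) 1, FS z x0 = OET x0 z - S z (ONT x0 z))
    (H : Type*) [NormedAddCommGroup H] [InnerProductSpace ℂ H] [CompleteSpace H]
    (J : H →ₗ[ℂ] (ℂ → Y)) (k : ℂ → Y → H) (hH : IsDBRSpace S H J k)
    (MF : X →L[ℂ] H)
    (hMF : ∀ x0 : X, ∀ z ∈ ball (0:ℂ) 1, J (MF x0) z = FS z x0)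
    -- `P := M_{F^S}^{[*]} M_{F^S}`
    (P : X →L[ℂ] X) (hP : P = adjoint MF ∘L MF)
    -- the function `f : D → Y`
    (f : ℂ → Y) :
    (∃ g : H, (∀ z ∈ ball (0:ℂ) 1, J g z = f z) ∧ adjoint MF g = x ∧ ‖g‖ ≤ 1) ↔
      (∀ (n : ℕ) (z : Fin n → ℂ), (∀ i, z i ∈ ball (0:ℂ) 1) →
        ∀ (c : Fin n → ℂ) (xv : Fin n → X) (yv : Fin n → Y),
          0 ≤ ∑ i, ∑ j,
            ((starRingEnd ℂ) (c i) *
                (c j + ⟪x, xv j⟫_ℂ + ⟪f (z j), yv j⟫_ℂ)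
              + ⟪xv i, (c j) • x + P (xv j) + adjoint (FS (z j)) (yv j)⟫_ℂ
              + ⟪yv i, (c j) • f (z i) + FS (z i) (xv j)
                  + dbrKernel S (z i) (z j) (yv j)⟫_ℂ)) := by
  classical
  constructor
  · rintro ⟨g, hg, hgx, hgn⟩ n z hz c xv yv
    rw [aux_lemA hH FS MF hMF P hP x f z hz c xv yv]
    refine aux_fwd_nonneg g _ _ _ ?_ hgn
    rw [inner_sum]
    refine Finset.sum_congr rfl fun i _ => ?_
    rw [inner_add_right]
    congr 1
    · rw [← hgx, ContinuousLinearMap.adjoint_inner_left]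
    · calc ⟪f (z i), yv i⟫_ℂ
          = (starRingEnd ℂ) ⟪yv i, f (z i)⟫_ℂ := (inner_conj_symm _ _).symm
        _ = (starRingEnd ℂ) ⟪yv i, J g (z i)⟫_ℂ := by rw [hg _ (hz i)]
        _ = (starRingEnd ℂ) ⟪k (z i) (yv i), g⟫_ℂ := by
            rw [hH.reproducing _ (hz i)]
        _ = ⟪g, k (z i) (yv i)⟫_ℂ := inner_conj_symm _ _
  · intro hpos
    set k' : ℂ → Y → H := fun ζ y => if ζ ∈ ball (0:ℂ) 1 then k ζ y else 0 with hk'def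
    set f' : ℂ → Y := fun ζ => if ζ ∈ ball (0:ℂ) 1 then f ζ else 0 with hf'def
    have hk'eq : ∀ ζ, ζ ∈ ball (0:ℂ) 1 → ∀ y, k' ζ y = k ζ y := by
      intro ζ hζ y; rw [hk'def]; exact if_pos hζ
    have hk'0 : ∀ ζ, ζ ∉ ball (0:ℂ) 1 → ∀ y, k' ζ y = 0 := by
      intro ζ hζ y; rw [hk'def]; exact if_neg hζ
    have hf'eq : ∀ ζ, ζ ∈ ball (0:ℂ) 1 → f' ζ = f ζ := by
      intro ζ hζ; rw [hf'def]; exact if_pos hζ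
    have hf'0 : ∀ ζ, ζ ∉ ball (0:ℂ) 1 → f' ζ = 0 := by
      intro ζ hζ; rw [hf'def]; exact if_neg hζ
    have k'z : ∀ ζ, k' ζ (0:Y) = 0 := by
      intro ζ
      by_cases h : ζ ∈ ball (0:ℂ) 1
      · rw [hk'eq ζ h]; exact aux_k_zero hH h
      · exact hk'0 ζ h 0
    have k'add : ∀ ζ (y y' : Y), k' ζ (y + y') = k' ζ y + k' ζ y' := by
      intro ζ y y'
      by_cases h : ζ ∈ ball (0:ℂ) 1
      · rw [hk'eq ζ h, hk'eq ζ h, hk'eq ζ h]; exact aux_k_add hH h y y'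
      · rw [hk'0 ζ h, hk'0 ζ h, hk'0 ζ h, add_zero]
    have k'smul : ∀ ζ (a : ℂ) (y : Y), k' ζ (a • y) = a • k' ζ y := by
      intro ζ a y
      by_cases h : ζ ∈ ball (0:ℂ) 1
      · rw [hk'eq ζ h, hk'eq ζ h]; exact aux_k_smul hH h a y
      · rw [hk'0 ζ h, hk'0 ζ h, smul_zero]
    let Φ : (X × (ℂ →₀ Y)) →ₗ[ℂ] H :=
      { toFun := fun m => MF m.1 + m.2.sum k'
        map_add' := by
          intro m m'
          simp only [Prod.fst_add, Prod.snd_add, map_add]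
          rw [Finsupp.sum_add_index' k'z k'add]
          abel
        map_smul' := by
          intro a m
          simp only [Prod.smul_fst, Prod.smul_snd, map_smul, RingHom.id_apply]
          rw [Finsupp.sum_smul_index' k'z]
          simp only [k'smul]
          rw [← Finsupp.smul_sum, smul_add] }
    let ψL : (X × (ℂ →₀ Y)) →ₗ[ℂ] ℂ :=
      { toFun := fun m => ⟪x, m.1⟫_ℂ + m.2.sum fun ζ y => ⟪f' ζ, y⟫_ℂ
        map_add' := by
          intro m m'
          simp only [Prod.fst_add, Prod.snd_add, inner_add_right]
          rw [Finsupp.sum_add_index' (fun ζ => inner_zero_right _)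
            (fun ζ y y' => inner_add_right _ _ _)]
          ring
        map_smul' := by
          intro a m
          simp only [Prod.smul_fst, Prod.smul_snd, inner_smul_right, RingHom.id_apply]
          rw [Finsupp.sum_smul_index' (fun ζ => inner_zero_right _)]
          simp only [inner_smul_right]
          have hms : (m.2.sum fun ζ y => a * ⟪f' ζ, y⟫_ℂ)
              = a * (m.2.sum fun ζ y => ⟪f' ζ, y⟫_ℂ) :=
            (Finset.mul_sum _ _ _).symm
          rw [hms, smul_eq_mul]
          ring }
    have key : ∀ m : X × (ℂ →₀ Y), ‖ψL m‖ ≤ ‖Φ m‖ := by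
      rintro ⟨x₀, μ⟩
      set s : Finset ℂ := μ.support.filter (fun ζ => ζ ∈ ball (0:ℂ) 1) with hs
      set e : Fin s.card → ℂ := fun i => (s.equivFin.symm i : ℂ) with he
      have hee : ∀ i, e i = (s.equivFin.symm i : ℂ) := fun i => rfl
      have heb : ∀ i, e i ∈ ball (0:ℂ) 1 := by
        intro i
        exact (Finset.mem_filter.mp (s.equivFin.symm i).2).2
      have hΦ : Φ (x₀, μ) = MF x₀ + ∑ i, k (e i) (μ (e i)) := by
        show MF x₀ + μ.sum k' = _
        congr 1
        have h1 : μ.sum k' = ∑ ζ ∈ s, k' ζ (μ ζ) := by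
          refine (Finset.sum_subset (Finset.filter_subset _ _) ?_).symm
          intro ζ hζ hns
          show k' ζ (μ ζ) = 0
          exact hk'0 ζ (fun hb => hns (Finset.mem_filter.mpr ⟨hζ, hb⟩)) _
        rw [h1, ← aux_sum_over s (fun ζ => k' ζ (μ ζ)) e hee]
        refine Finset.sum_congr rfl fun i _ => ?_
        rw [hk'eq _ (heb i)]
      have hψ : ψL (x₀, μ) = ⟪x, x₀⟫_ℂ + ∑ i, ⟪f (e i), μ (e i)⟫_ℂ := by
        show ⟪x, x₀⟫_ℂ + μ.sum (fun ζ y => ⟪f' ζ, y⟫_ℂ) = _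
        congr 1
        have h1 : μ.sum (fun ζ y => ⟪f' ζ, y⟫_ℂ) = ∑ ζ ∈ s, ⟪f' ζ, μ ζ⟫_ℂ := by
          refine (Finset.sum_subset (Finset.filter_subset _ _) ?_).symm
          intro ζ hζ hns
          show ⟪f' ζ, μ ζ⟫_ℂ = 0
          rw [hf'0 ζ (fun hb => hns (Finset.mem_filter.mpr ⟨hζ, hb⟩)), inner_zero_left]
        rw [h1, ← aux_sum_over s (fun ζ => ⟪f' ζ, μ ζ⟫_ℂ) e hee]
        refine Finset.sum_congr rfl fun i _ => ?_
        rw [hf'eq _ (heb i)]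
      have h0b : (0:ℂ) ∈ ball (0:ℂ) 1 := mem_ball_self one_pos
      set A : ℂ := ψL (x₀, μ) with hA
      set zf : Fin (s.card + 1) → ℂ := Fin.cons (0:ℂ) e with hzf
      set cv : Fin (s.card + 1) → ℂ := Fin.cons (-A) 0 with hcv
      set xvv : Fin (s.card + 1) → X := Fin.cons x₀ 0 with hxvv
      set yvv : Fin (s.card + 1) → Y := Fin.cons (0:Y) (fun i => μ (e i)) with hyvv
      have hzball : ∀ i : Fin (s.card + 1), zf i ∈ ball (0:ℂ) 1 := by
        intro i
        induction i using Fin.cases with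
        | zero => rw [hzf]; simpa using h0b
        | succ i => rw [hzf]; simpa using heb i
      have hp := hpos (s.card + 1) zf hzball cv xvv yvv
      rw [aux_lemA hH FS MF hMF P hP x f zf hzball cv xvv yvv] at hp
      have hC : (∑ i, cv i) = -A := by
        rw [hcv, Fin.sum_univ_succ]; simp
      have hAsum : (∑ i : Fin (s.card + 1),
          (⟪x, xvv i⟫_ℂ + ⟪f (zf i), yvv i⟫_ℂ)) = A := by
        rw [hzf, hxvv, hyvv, Fin.sum_univ_succ]
        simp only [Fin.cons_zero, Fin.cons_succ, Pi.zero_apply, inner_zero_right,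
          inner_zero_left, add_zero, zero_add]
        exact (hA.trans hψ).symm
      have hU : (∑ i : Fin (s.card + 1),
          (MF (xvv i) + k (zf i) (yvv i))) = Φ (x₀, μ) := by
        rw [hzf, hxvv, hyvv, Fin.sum_univ_succ]
        simp only [Fin.cons_zero, Fin.cons_succ, Pi.zero_apply, map_zero, zero_add,
          aux_k_zero hH h0b, add_zero]
        rw [hΦ]
      rw [hC, hAsum, hU] at hp
      exact aux_back_ineq A (Φ (x₀, μ)) hp
    have hψeq : ∀ m m' : X × (ℂ →₀ Y), Φ m = Φ m' → ψL m = ψL m' := by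
      intro m m' h
      have h2 := key (m - m')
      rw [map_sub, map_sub, h, sub_self, norm_zero] at h2
      exact sub_eq_zero.mp (norm_le_zero_iff.mp h2)
    set R : Submodule ℂ H := LinearMap.range Φ with hR
    have hsel : ∀ r : R, ∃ m, Φ m = (r : H) := fun r => LinearMap.mem_range.mp r.2
    choose pre hpre using hsel
    let L : R →ₗ[ℂ] ℂ :=
      { toFun := fun r => ψL (pre r)
        map_add' := by
          intro r r'
          rw [← map_add ψL]
          exact hψeq _ _ (by rw [hpre, map_add, hpre, hpre, Submodule.coe_add])
        map_smul' := by
          intro a r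
          rw [RingHom.id_apply, ← map_smul ψL]
          exact hψeq _ _ (by rw [hpre, map_smul, hpre, Submodule.coe_smul]) }
    have hLb : ∀ r : R, ‖L r‖ ≤ 1 * ‖r‖ := by
      intro r
      rw [one_mul]
      calc ‖ψL (pre r)‖ ≤ ‖Φ (pre r)‖ := key _
        _ = ‖(r : H)‖ := by rw [hpre]
        _ = ‖r‖ := rfl
    let Lc : R →L[ℂ] ℂ := L.mkContinuous 1 hLb
    obtain ⟨G, hGe, hGn⟩ := exists_extension_norm_eq R Lc
    have hGnorm : ‖G‖ ≤ 1 := by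
      rw [hGn]; exact L.mkContinuous_norm_le zero_le_one hLb
    set g : H := (InnerProductSpace.toDual ℂ H).symm G with hgdef
    have hginner : ∀ v : H, ⟪g, v⟫_ℂ = G v := fun v =>
      InnerProductSpace.toDual_symm_apply
    have hgΦ : ∀ m, ⟪g, Φ m⟫_ℂ = ψL m := by
      intro m
      have hm : Φ m ∈ R := ⟨m, rfl⟩
      rw [hginner]
      have h1 : G (Φ m) = Lc ⟨Φ m, hm⟩ := hGe ⟨Φ m, hm⟩
      rw [h1]
      show ψL (pre ⟨Φ m, hm⟩) = ψL m
      exact hψeq _ _ (by rw [hpre])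
    refine ⟨g, ?_, ?_, ?_⟩
    · intro ζ hζ
      refine ext_inner_left ℂ fun y => ?_
      rw [← hH.reproducing ζ hζ y g]
      have h2 : k ζ y = Φ (0, Finsupp.single ζ y) := by
        show k ζ y = MF 0 + (Finsupp.single ζ y).sum k'
        rw [map_zero, Finsupp.sum_single_index (k'z ζ), zero_add, hk'eq ζ hζ]
      have h3 : ⟪g, k ζ y⟫_ℂ = ⟪f ζ, y⟫_ℂ := by
        rw [h2, hgΦ]
        show ⟪x, (0:X)⟫_ℂ + (Finsupp.single ζ y).sum (fun ζ y => ⟪f' ζ, y⟫_ℂ) = _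
        rw [inner_zero_right,
          Finsupp.sum_single_index (h := fun ζ' y' => ⟪f' ζ', y'⟫_ℂ) (by simp),
          zero_add, hf'eq ζ hζ]
      calc ⟪k ζ y, g⟫_ℂ = (starRingEnd ℂ) ⟪g, k ζ y⟫_ℂ := (inner_conj_symm _ _).symm
        _ = (starRingEnd ℂ) ⟪f ζ, y⟫_ℂ := by rw [h3]
        _ = ⟪y, f ζ⟫_ℂ := inner_conj_symm _ _
    · refine ext_inner_left ℂ fun v => ?_
      rw [ContinuousLinearMap.adjoint_inner_right]
      have h2 : MF v = Φ (v, 0) := by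
        show MF v = MF v + (0 : ℂ →₀ Y).sum k'
        rw [Finsupp.sum_zero_index, add_zero]
      have h3 : ⟪g, MF v⟫_ℂ = ⟪x, v⟫_ℂ := by
        rw [h2, hgΦ]
        show ⟪x, v⟫_ℂ + (0 : ℂ →₀ Y).sum (fun ζ y => ⟪f' ζ, y⟫_ℂ) = _
        rw [Finsupp.sum_zero_index, add_zero]
      calc ⟪MF v, g⟫_ℂ = (starRingEnd ℂ) ⟪g, MF v⟫_ℂ := (inner_conj_symm _ _).symm
        _ = (starRingEnd ℂ) ⟪x, v⟫_ℂ := by rw [h3]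
        _ = ⟪v, x⟫_ℂ := inner_conj_symm _ _
    · calc ‖g‖ = ‖G‖ := LinearIsometryEquiv.norm_map _ G
        _ ≤ 1 := hGnorm

end
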